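/- arXiv:1005.1860 — 9 statements merged into one kernel-verified Lean document; each statement's English description precedes it below -/
import Mathlib

section
/- Let ε ≥ 0 and let v* : S → ℝ be a fixed point of B (B v* = v*). If v : S → ℝ is ε-transitive-feasible (i.e., v s ≥ (B v) s − ε for all s), then v s ≥ v* s − ε/(1−γ) for all s ∈ S. -/
theorem transitive_feasible_upper_bound
    {S A : Type*} [Fintype S] [Nonempty S] [Fintype A] [Nonempty A]
    (P : A → S → S → ℝ) (r : A → S → ℝ) (γ : ℝ)
    (hP0 : ∀ a s s', 0 ≤ P a s s') (hP1 : ∀ a s, ∑ s', P a s s' = 1)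
    (hγ0 : 0 ≤ γ) (hγ1 : γ < 1)
    (B : (S → ℝ) → S → ℝ)
    (hB : ∀ v s, B v s =
      Finset.univ.sup' Finset.univ_nonempty
        (fun a => r a s + γ * ∑ s', P a s s' * v s'))
    (ε : ℝ) (hε : 0 ≤ ε)
    (vstar : S → ℝ) (hfix : B vstar = vstar)
    (v : S → ℝ) (hv : ∀ s, v s ≥ B v s - ε) :
    ∀ s, v s ≥ vstar s - ε / (1 - γ) := by
  have hγpos : 0 < 1 - γ := by linarith
  set M : ℝ := Finset.univ.sup' Finset.univ_nonempty (fun s => vstar s - v s) with hM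
  have hle : ∀ s, vstar s - v s ≤ M := fun s =>
    Finset.le_sup' (fun s => vstar s - v s) (Finset.mem_univ s)
  -- key: M ≤ γ*M + ε
  have hkey : M ≤ γ * M + ε := by
    obtain ⟨s, -, hs⟩ := Finset.exists_mem_eq_sup' Finset.univ_nonempty
      (fun s => vstar s - v s)
    -- optimal action for vstar at s
    obtain ⟨a, -, ha⟩ := Finset.exists_mem_eq_sup' (Finset.univ_nonempty (α := A))
      (fun a => r a s + γ * ∑ s', P a s s' * vstar s')
    have h1 : vstar s = r a s + γ * ∑ s', P a s s' * vstar s' := by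
      conv_lhs => rw [← hfix]
      rw [hB, ha]
    have h2 : v s ≥ r a s + γ * ∑ s', P a s s' * v s' - ε := by
      have := hv s
      rw [hB] at this
      have hle2 : r a s + γ * ∑ s', P a s s' * v s' ≤
          Finset.univ.sup' Finset.univ_nonempty
            (fun a => r a s + γ * ∑ s', P a s s' * v s') :=
        Finset.le_sup' (fun a => r a s + γ * ∑ s', P a s s' * v s')
          (Finset.mem_univ a)
      linarith
    have h3 : ∑ s', P a s s' * vstar s' - ∑ s', P a s s' * v s' ≤ M := by
      rw [← Finset.sum_sub_distrib]
      calc ∑ s', (P a s s' * vstar s' - P a s s' * v s')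
          = ∑ s', P a s s' * (vstar s' - v s') := by
            apply Finset.sum_congr rfl; intro x _; ring
        _ ≤ ∑ s', P a s s' * M := by
            apply Finset.sum_le_sum; intro x _
            exact mul_le_mul_of_nonneg_left (hle x) (hP0 a s x)
        _ = M := by rw [← Finset.sum_mul, hP1, one_mul]
    have : vstar s - v s ≤ γ * (∑ s', P a s s' * vstar s' - ∑ s', P a s s' * v s') + ε := by
      rw [h1]; linarith
    have hMs : M = vstar s - v s := hs
    have h4 := mul_le_mul_of_nonneg_left h3 hγ0
    show M ≤ γ * M + ε
    linarith
  have hMbound : M ≤ ε / (1 - γ) := by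
    rw [le_div_iff₀ hγpos]; nlinarith
  intro s
  have := hle s
  linarith
end

section
/- Let v* : S → ℝ be a fixed point of B and let R be a constant-closed set of functions S → ℝ. If there exists v ∈ R with ‖v − v*‖_∞ ≤ ε (i.e., |v s − v* s| ≤ ε for all s), then there exists v' ∈ R that is transitive-feasible and satisfies ‖v' − v*‖_∞ ≤ 2ε/(1−γ). -/
theorem exists_transitive_feasible_close
    {S A : Type*} [Fintype S] [Nonempty S] [Fintype A] [Nonempty A]
    (P : A → S → S → ℝ) (r : A → S → ℝ) (γ : ℝ)
    (hP0 : ∀ a s s', 0 ≤ P a s s') (hP1 : ∀ a s, ∑ s', P a s s' = 1)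
    (hγ0 : 0 ≤ γ) (hγ1 : γ < 1)
    (B : (S → ℝ) → S → ℝ)
    (hB : ∀ v s, B v s =
      Finset.univ.sup' Finset.univ_nonempty
        (fun a => r a s + γ * ∑ s', P a s s' * v s'))
    (vstar : S → ℝ) (hfix : B vstar = vstar)
    (R : Set (S → ℝ))
    (hR : ∀ u ∈ R, ∀ k : ℝ, (fun s => u s + k) ∈ R)
    (ε : ℝ)
    (hex : ∃ v ∈ R, ∀ s, |v s - vstar s| ≤ ε) :
    ∃ v' ∈ R, (∀ s, v' s ≥ B v' s) ∧ (∀ s, |v' s - vstar s| ≤ 2 * ε / (1 - γ)) := by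
  obtain ⟨v, hvR, hv⟩ := hex
  have hγ' : 0 < 1 - γ := by linarith
  have hε0 : 0 ≤ ε := le_trans (abs_nonneg _) (hv (Classical.arbitrary S))
  set k : ℝ := (1 + γ) * ε / (1 - γ) with hk
  have hk0 : 0 ≤ k := by positivity
  have hkeq : (1 - γ) * k = (1 + γ) * ε := by
    rw [hk]; field_simp
  have hsumk : ∀ a s, ∑ s', P a s s' * (v s' + k) = (∑ s', P a s s' * v s') + k := by
    intro a s
    have : ∑ s', P a s s' * (v s' + k)
        = (∑ s', P a s s' * v s') + (∑ s', P a s s') * k := by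
      rw [Finset.sum_mul, ← Finset.sum_add_distrib]
      congr 1; ext s'; ring
    rw [this, hP1, one_mul]
  refine ⟨fun s => v s + k, hR v hvR k, ?_, ?_⟩
  · intro s
    have hBv : B v s ≤ vstar s + γ * ε := by
      rw [hB]
      apply Finset.sup'_le
      intro a _
      have hsum : ∑ s', P a s s' * v s' ≤ (∑ s', P a s s' * vstar s') + ε := by
        have h1 : ∑ s', P a s s' * v s' ≤ ∑ s', P a s s' * (vstar s' + ε) := by
          apply Finset.sum_le_sum
          intro i _
          have hle : v i ≤ vstar i + ε := by
            have := abs_le.mp (hv i); linarith [this.2]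
          exact mul_le_mul_of_nonneg_left hle (hP0 a s i)
        have h2 : ∑ s', P a s s' * (vstar s' + ε)
            = (∑ s', P a s s' * vstar s') + (∑ s', P a s s') * ε := by
          rw [Finset.sum_mul, ← Finset.sum_add_distrib]
          congr 1; ext s'; ring
        rw [h2, hP1, one_mul] at h1
        exact h1
      have hle : r a s + γ * ∑ s', P a s s' * vstar s' ≤ vstar s := by
        conv_rhs => rw [← hfix]
        rw [hB]
        exact Finset.le_sup' (fun a => r a s + γ * ∑ s', P a s s' * vstar s')
          (Finset.mem_univ a)
      nlinarith
    have hBvk : B (fun s => v s + k) s ≤ B v s + γ * k := by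
      rw [hB]
      apply Finset.sup'_le
      intro a _
      rw [hsumk a s]
      have : r a s + γ * ∑ s', P a s s' * v s' ≤ B v s := by
        rw [hB]
        exact Finset.le_sup' (fun a => r a s + γ * ∑ s', P a s s' * v s')
          (Finset.mem_univ a)
      linarith
    have hvs : vstar s ≤ v s + ε := by
      have := abs_le.mp (hv s); linarith [this.1]
    show v s + k ≥ B (fun s => v s + k) s
    nlinarith
  · intro s
    have habs := abs_le.mp (hv s)
    have hsum : ε + k = 2 * ε / (1 - γ) := by
      rw [hk]; field_simp; ring
    rw [abs_le]
    constructor <;> simp only <;> linarith [habs.1, habs.2]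
end

section
/- Let v* : S → ℝ be a fixed point of B and ρ a distribution on S. If v : S → ℝ is transitive-feasible, then ‖v − v*‖_{1,ρ} = ρᵀv − ρᵀv*, i.e., ∑_s ρ s * |v s − v* s| = ∑_s ρ s * (v s − v* s). -/
theorem weighted_l1_eq_of_transitive_feasible
    {S A : Type*} [Fintype S] [Nonempty S] [Fintype A] [Nonempty A]
    (P : A → S → S → ℝ) (r : A → S → ℝ) (γ : ℝ)
    (hP0 : ∀ a s s', 0 ≤ P a s s') (hP1 : ∀ a s, ∑ s', P a s s' = 1)
    (hγ0 : 0 ≤ γ) (hγ1 : γ < 1)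
    (B : (S → ℝ) → S → ℝ)
    (hB : ∀ v s, B v s =
      Finset.univ.sup' Finset.univ_nonempty
        (fun a => r a s + γ * ∑ s', P a s s' * v s'))
    (vstar : S → ℝ) (hfix : B vstar = vstar)
    (ρ : S → ℝ) (hρ0 : ∀ s, ρ s ≥ 0) (hρ1 : ∑ s, ρ s = 1)
    (v : S → ℝ) (hv : ∀ s, v s ≥ B v s) :
    ∑ s, ρ s * |v s - vstar s| = ∑ s, ρ s * (v s - vstar s) := by
  -- obtain a minimizer of v - vstar
  obtain ⟨s0, -, hs0⟩ := Finset.exists_min_image (Finset.univ : Finset S)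
    (fun s => v s - vstar s) Finset.univ_nonempty
  set m : ℝ := v s0 - vstar s0 with hm
  have hmin : ∀ s, m ≤ v s - vstar s := fun s => hs0 s (Finset.mem_univ s)
  -- B v s0 ≥ B vstar s0 + γ * m
  have hkey : B vstar s0 + γ * m ≤ B v s0 := by
    rw [hB, hB, ← le_sub_iff_add_le]
    apply Finset.sup'_le
    intro a _
    rw [le_sub_iff_add_le]
    have h1 : ∑ s', P a s0 s' * vstar s' + m ≤ ∑ s', P a s0 s' * v s' := by
      have : ∑ s', P a s0 s' * vstar s' + ∑ s', P a s0 s' * m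
          ≤ ∑ s', P a s0 s' * vstar s' + ∑ s', P a s0 s' * (v s' - vstar s') := by
        have := Finset.sum_le_sum (fun s' (_ : s' ∈ Finset.univ) =>
          mul_le_mul_of_nonneg_left (hmin s') (hP0 a s0 s'))
        linarith
      have h2 : ∑ s', P a s0 s' * m = m := by
        rw [← Finset.sum_mul, hP1, one_mul]
      have h3 : ∑ s', P a s0 s' * vstar s' + ∑ s', P a s0 s' * (v s' - vstar s')
          = ∑ s', P a s0 s' * v s' := by
        rw [← Finset.sum_add_distrib]
        congr 1; ext s'; ring
      linarith
    have h4 : r a s0 + γ * ∑ s', P a s0 s' * v s'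
        ≤ Finset.univ.sup' Finset.univ_nonempty
          (fun a => r a s0 + γ * ∑ s', P a s0 s' * v s') :=
      Finset.le_sup' (fun a => r a s0 + γ * ∑ s', P a s0 s' * v s') (Finset.mem_univ a)
    have h5 : γ * (∑ s', P a s0 s' * vstar s' + m) ≤ γ * ∑ s', P a s0 s' * v s' :=
      mul_le_mul_of_nonneg_left h1 hγ0
    nlinarith [h4, h5]
  have hvs : vstar s0 = B vstar s0 := by rw [hfix]
  have hgm : γ * m ≤ m := by
    have := hv s0
    linarith
  have hm0 : 0 ≤ m := by nlinarith
  have hge : ∀ s, vstar s ≤ v s := fun s => by linarith [hmin s]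
  apply Finset.sum_congr rfl
  intro s _
  rw [abs_of_nonneg (by linarith [hge s])]
end

section
/- (Offline error bound, full ALP.) Let v* : S → ℝ be a fixed point of B, ρ a distribution on S, and R a constant-closed set of functions S → ℝ. Suppose v̂ ∈ R is transitive-feasible and minimizes ρᵀ over all transitive-feasible elements of R (for every transitive-feasible u ∈ R, ρᵀv̂ ≤ ρᵀu). Then for every v ∈ R, ‖v̂ − v*‖_{1,ρ} ≤ (2/(1−γ)) * ‖v − v*‖_∞, where ‖v − v*‖_∞ = max_{s∈S} |v s − v* s|. -/
theorem offline_error_bound_full_ALP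
    {S A : Type*} [Fintype S] [Nonempty S] [Fintype A] [Nonempty A]
    (P : A → S → S → ℝ) (r : A → S → ℝ) (γ : ℝ)
    (hP0 : ∀ a s s', 0 ≤ P a s s') (hP1 : ∀ a s, ∑ s', P a s s' = 1)
    (hγ0 : 0 ≤ γ) (hγ1 : γ < 1)
    (B : (S → ℝ) → S → ℝ)
    (hB : ∀ v s, B v s =
      Finset.univ.sup' Finset.univ_nonempty
        (fun a => r a s + γ * ∑ s', P a s s' * v s'))
    (vstar : S → ℝ) (hfix : B vstar = vstar)
    (ρ : S → ℝ) (hρ0 : ∀ s, ρ s ≥ 0) (hρ1 : ∑ s, ρ s = 1)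
    (R : Set (S → ℝ))
    (hR : ∀ u ∈ R, ∀ k : ℝ, (fun s => u s + k) ∈ R)
    (vhat : S → ℝ) (hvhatR : vhat ∈ R) (hvhatTF : ∀ s, vhat s ≥ B vhat s)
    (hvhatOpt : ∀ u ∈ R, (∀ s, u s ≥ B u s) →
      ∑ s, ρ s * vhat s ≤ ∑ s, ρ s * u s) :
    ∀ v ∈ R,
      ∑ s, ρ s * |vhat s - vstar s| ≤
        (2 / (1 - γ)) *
          Finset.univ.sup' Finset.univ_nonempty (fun s => |v s - vstar s|) := by
  have h1γ : (0:ℝ) < 1 - γ := by linarith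
  -- monotonicity of B
  have hmono : ∀ w w' : S → ℝ, (∀ s, w s ≤ w' s) → ∀ s, B w s ≤ B w' s := by
    intro w w' hww s
    rw [hB, hB]
    apply Finset.sup'_le
    intro a _
    refine le_trans ?_ (Finset.le_sup' _ (Finset.mem_univ a))
    have : ∑ s', P a s s' * w s' ≤ ∑ s', P a s s' * w' s' :=
      Finset.sum_le_sum fun s' _ => mul_le_mul_of_nonneg_left (hww s') (hP0 a s s')
    nlinarith [mul_le_mul_of_nonneg_left this hγ0]
  -- shift rule
  have hshift : ∀ (w : S → ℝ) (c : ℝ) (s : S),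
      B (fun s => w s + c) s = B w s + γ * c := by
    intro w c s
    rw [hB, hB]
    have hsum : ∀ a : A, ∑ s', P a s s' * (w s' + c) = (∑ s', P a s s' * w s') + c := by
      intro a
      simp [mul_add, Finset.sum_add_distrib, ← Finset.sum_mul, hP1 a s]
    apply le_antisymm
    · apply Finset.sup'_le
      intro a _
      have := Finset.le_sup' (f := fun a => r a s + γ * ∑ s', P a s s' * w s')
        (Finset.mem_univ a)
      rw [hsum a]
      nlinarith [this]
    · have key : Finset.univ.sup' Finset.univ_nonempty
          (fun a => r a s + γ * ∑ s', P a s s' * w s') ≤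
          (Finset.univ.sup' Finset.univ_nonempty
            (fun a => r a s + γ * ∑ s', P a s s' * (w s' + c))) - γ * c := by
        apply Finset.sup'_le
        intro a _
        have := Finset.le_sup' (f := fun a => r a s + γ * ∑ s', P a s s' * (w s' + c))
          (Finset.mem_univ a)
        rw [hsum a] at this
        nlinarith [this]
      linarith
  -- transitive feasible implies above vstar
  have hge : ∀ u : S → ℝ, (∀ s, u s ≥ B u s) → ∀ s, vstar s ≤ u s := by
    intro u hu s
    set m := Finset.univ.sup' Finset.univ_nonempty (fun s => vstar s - u s) with hm
    have hle : ∀ s, vstar s ≤ u s + m := by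
      intro s
      have := Finset.le_sup' (f := fun s => vstar s - u s) (Finset.mem_univ s)
      linarith
    have key : ∀ s, vstar s - u s ≤ γ * m := by
      intro s
      have h1 : vstar s = B vstar s := by rw [hfix]
      have h2 : B vstar s ≤ B (fun s => u s + m) s := hmono _ _ hle s
      have h3 : B (fun s => u s + m) s = B u s + γ * m := hshift u m s
      have h4 := hu s
      linarith
    have hmγ : m ≤ γ * m := by
      apply Finset.sup'_le
      intro s _
      exact key s
    have hm0 : m ≤ 0 := by nlinarith
    have := Finset.le_sup' (f := fun s => vstar s - u s) (Finset.mem_univ s)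
    linarith
  intro v hv
  set ε := Finset.univ.sup' Finset.univ_nonempty (fun s => |v s - vstar s|) with hε
  have hvε : ∀ s, |v s - vstar s| ≤ ε := by
    intro s; rw [hε]
    exact Finset.le_sup' (fun s => |v s - vstar s|) (Finset.mem_univ s)
  have hε0 : 0 ≤ ε := by
    obtain ⟨s0⟩ := (inferInstance : Nonempty S)
    exact le_trans (abs_nonneg _) (hvε s0)
  set k := (1 + γ) * ε / (1 - γ) with hk
  have hk0 : 0 ≤ k := by positivity
  set u : S → ℝ := fun s => v s + k with hudef
  have huR : u ∈ R := hR v hv k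
  have huTF : ∀ s, u s ≥ B u s := by
    intro s
    have h1 : B u s = B v s + γ * k := hshift v k s
    have h2 : ∀ t, v t ≤ vstar t + ε := by
      intro t
      have := hvε t
      have := abs_le.mp this
      linarith [this.2]
    have h3 : B v s ≤ B (fun t => vstar t + ε) s := hmono _ _ h2 s
    have h4 : B (fun t => vstar t + ε) s = B vstar s + γ * ε := hshift vstar ε s
    have h5 : B vstar s = vstar s := by rw [hfix]
    have h6 : vstar s ≤ v s + ε := by
      have := abs_le.mp (hvε s); linarith [this.1]
    have hkeq : (1 - γ) * k = (1 + γ) * ε := by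
      rw [hk, mul_div_assoc']; exact mul_div_cancel_left₀ _ (ne_of_gt h1γ)
    simp only [hudef]
    nlinarith
  have hvhat_ge : ∀ s, vstar s ≤ vhat s := hge vhat hvhatTF
  have habs : ∀ s, |vhat s - vstar s| = vhat s - vstar s := by
    intro s; exact abs_of_nonneg (by linarith [hvhat_ge s])
  calc ∑ s, ρ s * |vhat s - vstar s|
      = ∑ s, (ρ s * vhat s - ρ s * vstar s) := by
        apply Finset.sum_congr rfl; intro s _; rw [habs s]; ring
    _ = (∑ s, ρ s * vhat s) - ∑ s, ρ s * vstar s := by rw [Finset.sum_sub_distrib]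
    _ ≤ (∑ s, ρ s * u s) - ∑ s, ρ s * vstar s := by
        linarith [hvhatOpt u huR huTF]
    _ = ∑ s, ρ s * (v s + k - vstar s) := by
        rw [← Finset.sum_sub_distrib]
        apply Finset.sum_congr rfl; intro s _; simp only [hudef]; ring
    _ ≤ ∑ s, ρ s * (ε + k) := by
        apply Finset.sum_le_sum
        intro s _
        apply mul_le_mul_of_nonneg_left _ (hρ0 s)
        have := abs_le.mp (hvε s)
        linarith [this.2]
    _ = ε + k := by rw [← Finset.sum_mul, hρ1, one_mul]
    _ = (2 / (1 - γ)) * ε := by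
        have hkeq' : (1 - γ) * k = (1 + γ) * ε := by
          rw [hk, mul_div_assoc']; exact mul_div_cancel_left₀ _ (ne_of_gt h1γ)
        field_simp [hk]; linear_combination hkeq'
end

section
/- (Offline error bound, sampled ALP.) Let v* : S → ℝ be a fixed point of B, let ρ and ρ̄ be distributions on S, R a constant-closed set of functions S → ℝ, D ⊆ S × A a set of sampled state–action pairs, and ε_p, ε_c ≥ 0. Assume: (i) every v ∈ R that is D-feasible is ε_p-transitive-feasible; (ii) |ρᵀv − ρ̄ᵀv| ≤ ε_c for every v ∈ R; (iii) v̂ ∈ R is transitive-feasible and minimizes ρᵀ over all transitive-feasible elements of R; (iv) v̄ ∈ R is D-feasible and minimizes ρ̄ᵀ over all D-feasible elements of R. Then for every v ∈ R, ‖v̄ − v*‖_{1,ρ} ≤ (2/(1−γ)) * ‖v − v*‖_∞ + 2ε_c + 2ε_p/(1−γ). -/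
theorem offline_error_bound_sampled_ALP
    {S A : Type*} [Fintype S] [Nonempty S] [Fintype A] [Nonempty A]
    (P : A → S → S → ℝ) (r : A → S → ℝ) (γ : ℝ)
    (hP0 : ∀ a s s', 0 ≤ P a s s') (hP1 : ∀ a s, ∑ s', P a s s' = 1)
    (hγ0 : 0 ≤ γ) (hγ1 : γ < 1)
    (B : (S → ℝ) → S → ℝ)
    (hB : ∀ v s, B v s =
      Finset.univ.sup' Finset.univ_nonempty
        (fun a => r a s + γ * ∑ s', P a s s' * v s'))
    (vstar : S → ℝ) (hfix : B vstar = vstar)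
    (ρ ρbar : S → ℝ)
    (hρ0 : ∀ s, ρ s ≥ 0) (hρ1 : ∑ s, ρ s = 1)
    (hρbar0 : ∀ s, ρbar s ≥ 0) (hρbar1 : ∑ s, ρbar s = 1)
    (R : Set (S → ℝ))
    (hR : ∀ u ∈ R, ∀ k : ℝ, (fun s => u s + k) ∈ R)
    (D : Set (S × A)) (εp εc : ℝ) (hεp : 0 ≤ εp) (hεc : 0 ≤ εc)
    -- (i) every D-feasible v ∈ R is εp-transitive-feasible
    (hSampling : ∀ v ∈ R,
      (∀ p ∈ D, v p.1 ≥ r p.2 p.1 + γ * ∑ s', P p.2 p.1 s' * v s') →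
      (∀ s, v s ≥ B v s - εp))
    -- (ii) objective estimation error
    (hObj : ∀ v ∈ R, |(∑ s, ρ s * v s) - (∑ s, ρbar s * v s)| ≤ εc)
    -- (iii) vhat optimal for the full ALP
    (vhat : S → ℝ) (hvhatR : vhat ∈ R) (hvhatTF : ∀ s, vhat s ≥ B vhat s)
    (hvhatOpt : ∀ u ∈ R, (∀ s, u s ≥ B u s) →
      ∑ s, ρ s * vhat s ≤ ∑ s, ρ s * u s)
    -- (iv) vbar optimal for the sampled ALP
    (vbar : S → ℝ) (hvbarR : vbar ∈ R)
    (hvbarD : ∀ p ∈ D, vbar p.1 ≥ r p.2 p.1 + γ * ∑ s', P p.2 p.1 s' * vbar s')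
    (hvbarOpt : ∀ u ∈ R,
      (∀ p ∈ D, u p.1 ≥ r p.2 p.1 + γ * ∑ s', P p.2 p.1 s' * u s') →
      ∑ s, ρbar s * vbar s ≤ ∑ s, ρbar s * u s) :
    ∀ v ∈ R,
      ∑ s, ρ s * |vbar s - vstar s| ≤
        (2 / (1 - γ)) *
          Finset.univ.sup' Finset.univ_nonempty (fun s => |v s - vstar s|)
        + 2 * εc + 2 * εp / (1 - γ) := by
  intro v hv
  have hγ' : (0:ℝ) < 1 - γ := by linarith
  set d : ℝ := Finset.univ.sup' Finset.univ_nonempty (fun s => |v s - vstar s|) with hd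
  have hvd : ∀ s, |v s - vstar s| ≤ d := by
    intro s; rw [hd]
    exact Finset.le_sup' (fun s => |v s - vstar s|) (Finset.mem_univ s)
  have hd0 : 0 ≤ d := le_trans (abs_nonneg _) (hvd (Classical.arbitrary S))
  -- sum shift for P
  have hPsum : ∀ (a : A) (s : S) (u : S → ℝ) (k : ℝ),
      ∑ s', P a s s' * (u s' + k) = (∑ s', P a s s' * u s') + k := by
    intro a s u k
    have h1 : ∑ s', P a s s' * (u s' + k)
        = (∑ s', P a s s' * u s') + (∑ s', P a s s') * k := by
      rw [Finset.sum_mul, ← Finset.sum_add_distrib]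
      exact Finset.sum_congr rfl fun s' _ => by ring
    rw [h1, hP1, one_mul]
  -- shift lemma for B
  have hshift : ∀ (u : S → ℝ) (k : ℝ) (s : S), B (fun t => u t + k) s = B u s + γ * k := by
    intro u k s
    rw [hB, hB]
    apply le_antisymm
    · apply Finset.sup'_le
      intro a _
      have h : r a s + γ * ∑ s', P a s s' * u s' ≤
          Finset.univ.sup' Finset.univ_nonempty
            (fun a => r a s + γ * ∑ s', P a s s' * u s') :=
        Finset.le_sup' (fun a => r a s + γ * ∑ s', P a s s' * u s') (Finset.mem_univ a)
      rw [hPsum a s u k]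
      linarith
    · rw [← sub_nonneg]
      have h : ∀ a ∈ (Finset.univ : Finset A),
          r a s + γ * ∑ s', P a s s' * u s' ≤
          (Finset.univ.sup' Finset.univ_nonempty
            (fun a => r a s + γ * ∑ s', P a s s' * (u s' + k))) - γ * k := by
        intro a _
        have h2 : r a s + γ * ∑ s', P a s s' * (u s' + k) ≤
            Finset.univ.sup' Finset.univ_nonempty
              (fun a => r a s + γ * ∑ s', P a s s' * (u s' + k)) :=
          Finset.le_sup' (fun a => r a s + γ * ∑ s', P a s s' * (u s' + k))
            (Finset.mem_univ a)
        rw [hPsum a s u k] at h2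
        linarith
      have := Finset.sup'_le Finset.univ_nonempty _ h
      linarith
  -- monotonicity of B
  have hmono : ∀ (u w : S → ℝ), (∀ s, u s ≤ w s) → ∀ s, B u s ≤ B w s := by
    intro u w huw s
    rw [hB, hB]
    apply Finset.sup'_le
    intro a _
    have h : r a s + γ * ∑ s', P a s s' * w s' ≤
        Finset.univ.sup' Finset.univ_nonempty
          (fun a => r a s + γ * ∑ s', P a s s' * w s') :=
      Finset.le_sup' (fun a => r a s + γ * ∑ s', P a s s' * w s') (Finset.mem_univ a)
    have hsum : ∑ s', P a s s' * u s' ≤ ∑ s', P a s s' * w s' :=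
      Finset.sum_le_sum (fun s' _ => mul_le_mul_of_nonneg_left (huw s') (hP0 a s s'))
    nlinarith
  -- ε-transitive-feasible implies lower bound by vstar - ε/(1-γ)
  have hlb : ∀ (u : S → ℝ) (ε : ℝ), (∀ s, u s ≥ B u s - ε) →
      ∀ s, u s ≥ vstar s - ε / (1 - γ) := by
    intro u ε hu
    obtain ⟨s₀, -, hs₀⟩ := Finset.exists_mem_eq_inf' (Finset.univ_nonempty (α := S))
      (fun s => u s - vstar s)
    have hmle : ∀ t, vstar t + (u s₀ - vstar s₀) ≤ u t := by
      intro t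
      have h : Finset.univ.inf' Finset.univ_nonempty (fun s => u s - vstar s)
          ≤ u t - vstar t :=
        Finset.inf'_le (fun s => u s - vstar s) (Finset.mem_univ t)
      rw [hs₀] at h
      linarith
    have h1 : B (fun t => vstar t + (u s₀ - vstar s₀)) s₀ ≤ B u s₀ := hmono _ _ hmle s₀
    have h2 : B (fun t => vstar t + (u s₀ - vstar s₀)) s₀
        = vstar s₀ + γ * (u s₀ - vstar s₀) := by
      rw [hshift vstar (u s₀ - vstar s₀) s₀, hfix]
    have h3 : u s₀ - vstar s₀ ≥ γ * (u s₀ - vstar s₀) - ε := by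
      have := hu s₀; linarith
    have hc : ε / (1 - γ) * (1 - γ) = ε := div_mul_cancel₀ ε (ne_of_gt hγ')
    have hmge : -(ε / (1 - γ)) ≤ u s₀ - vstar s₀ := by nlinarith [h3, hc, hγ']
    intro s
    have := hmle s
    linarith
  -- vhat ≥ vstar
  have hvhat_ge : ∀ s, vhat s ≥ vstar s := by
    intro s
    have := hlb vhat 0 (fun s => by have := hvhatTF s; linarith) s
    simpa using this
  -- u := v + (1+γ)d/(1-γ) is transitive-feasible and in R
  set k : ℝ := (1 + γ) * d / (1 - γ) with hk
  have hkval : (1 - γ) * k = (1 + γ) * d := by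
    rw [hk]; field_simp
  have huR : (fun s => v s + k) ∈ R := hR v hv k
  have hBv : ∀ s, B v s ≤ v s + (1 + γ) * d := by
    intro s
    have h1 : B v s ≤ B (fun t => vstar t + d) s := by
      apply hmono
      intro t
      have := abs_le.mp (hvd t)
      linarith [this.2]
    have h2 : B (fun t => vstar t + d) s = vstar s + γ * d := by
      rw [hshift vstar d s, hfix]
    have h3 : vstar s ≤ v s + d := by
      have := abs_le.mp (hvd s); linarith [this.1]
    nlinarith
  have huTF : ∀ s, (fun s => v s + k) s ≥ B (fun s => v s + k) s := by
    intro s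
    rw [hshift v k s]
    show v s + k ≥ B v s + γ * k
    have := hBv s
    linarith [hkval]
  -- weighted sum of a constant shift
  have hsum_const : ∀ (w : S → ℝ) (c : ℝ),
      ∑ s, ρ s * (w s + c) = (∑ s, ρ s * w s) + c := by
    intro w c
    have h1 : ∑ s, ρ s * (w s + c) = (∑ s, ρ s * w s) + (∑ s, ρ s) * c := by
      rw [Finset.sum_mul, ← Finset.sum_add_distrib]
      exact Finset.sum_congr rfl fun s _ => by ring
    rw [h1, hρ1, one_mul]
  have hvhat_bd : ∑ s, ρ s * vhat s ≤ (∑ s, ρ s * vstar s) + 2 * d / (1 - γ) := by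
    have h1 : ∑ s, ρ s * vhat s ≤ ∑ s, ρ s * (v s + k) := hvhatOpt _ huR huTF
    have h2 : ∑ s, ρ s * (v s + k) = (∑ s, ρ s * v s) + k := hsum_const v k
    have h3 : ∑ s, ρ s * v s ≤ ∑ s, ρ s * (vstar s + d) := by
      apply Finset.sum_le_sum
      intro s _
      have hle := abs_le.mp (hvd s)
      have := hρ0 s
      nlinarith [hle.2]
    have h4 : ∑ s, ρ s * (vstar s + d) = (∑ s, ρ s * vstar s) + d := hsum_const vstar d
    have h5 : d + k = 2 * d / (1 - γ) := by
      rw [hk]; field_simp; ring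
    linarith
  -- vbar is εp-transitive-feasible hence ≥ vstar - εp/(1-γ)
  have hvbar_lb : ∀ s, vbar s ≥ vstar s - εp / (1 - γ) :=
    hlb vbar εp (hSampling vbar hvbarR hvbarD)
  have hεp' : 0 ≤ εp / (1 - γ) := div_nonneg hεp (le_of_lt hγ')
  have habs : ∀ s, |vbar s - vstar s| ≤ (vbar s - vstar s) + 2 * (εp / (1 - γ)) := by
    intro s
    rcases abs_cases (vbar s - vstar s) with ⟨h, _⟩ | ⟨h, _⟩
    · rw [h]; linarith
    · rw [h]; have := hvbar_lb s; linarith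
  have hstep1 : ∑ s, ρ s * |vbar s - vstar s| ≤
      (∑ s, ρ s * vbar s) - (∑ s, ρ s * vstar s) + 2 * εp / (1 - γ) := by
    have h1 : ∑ s, ρ s * |vbar s - vstar s| ≤
        ∑ s, ρ s * ((vbar s - vstar s) + 2 * (εp / (1 - γ))) :=
      Finset.sum_le_sum (fun s _ => mul_le_mul_of_nonneg_left (habs s) (hρ0 s))
    have h2 : ∑ s, ρ s * ((vbar s - vstar s) + 2 * (εp / (1 - γ)))
        = (∑ s, ρ s * (vbar s - vstar s)) + 2 * (εp / (1 - γ)) :=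
      hsum_const (fun s => vbar s - vstar s) _
    have h3 : ∑ s, ρ s * (vbar s - vstar s)
        = (∑ s, ρ s * vbar s) - (∑ s, ρ s * vstar s) := by
      rw [← Finset.sum_sub_distrib]
      exact Finset.sum_congr rfl fun s _ => by ring
    have h4 : 2 * (εp / (1 - γ)) = 2 * εp / (1 - γ) := by ring
    linarith
  -- vhat is D-feasible
  have hvhatD : ∀ p ∈ D, vhat p.1 ≥ r p.2 p.1 + γ * ∑ s', P p.2 p.1 s' * vhat s' := by
    intro p _
    refine le_trans ?_ (hvhatTF p.1)
    rw [hB]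
    exact Finset.le_sup' (fun a => r a p.1 + γ * ∑ s', P a p.1 s' * vhat s')
      (Finset.mem_univ p.2)
  have hchain : ∑ s, ρ s * vbar s ≤ (∑ s, ρ s * vhat s) + 2 * εc := by
    have h1 := abs_le.mp (hObj vbar hvbarR)
    have h2 : ∑ s, ρbar s * vbar s ≤ ∑ s, ρbar s * vhat s := hvbarOpt vhat hvhatR hvhatD
    have h3 := abs_le.mp (hObj vhat hvhatR)
    linarith [h1.2, h3.1]
  calc ∑ s, ρ s * |vbar s - vstar s|
      ≤ (∑ s, ρ s * vbar s) - (∑ s, ρ s * vstar s) + 2 * εp / (1 - γ) := hstep1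
    _ ≤ 2 * d / (1 - γ) + 2 * εc + 2 * εp / (1 - γ) := by linarith
    _ = (2 / (1 - γ)) * d + 2 * εc + 2 * εp / (1 - γ) := by ring
end

section
/- (Offline error bound, estimated ALP.) Let v* : S → ℝ be a fixed point of B, let ρ and ρ̄ be distributions on S, R a constant-closed set of functions S → ℝ, D ⊆ S × A a set of sampled state–action pairs, T̃ a set of functions S → ℝ, and ε_p, ε_s, ε_c ≥ 0. Assume: (i) every v ∈ R that is D-feasible is ε_p-transitive-feasible; (ii) sandwich condition: every v ∈ R that is (D, −ε_s)-feasible belongs to T̃, and every v ∈ T̃ ∩ R is (D, ε_s)-feasible; (iii) |ρᵀv − ρ̄ᵀv| ≤ ε_c for every v ∈ R; (iv) v̂ ∈ R is transitive-feasible and minimizes ρᵀ over all transitive-feasible elements of R; (v) ṽ ∈ T̃ ∩ R minimizes ρ̄ᵀ over T̃ ∩ R. Then for every v ∈ R, ‖ṽ − v*‖_{1,ρ} ≤ (2/(1−γ)) * ‖v − v*‖_∞ + 2ε_c + (3ε_s + 2ε_p)/(1−γ). -/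
theorem offline_error_bound_estimated_ALP
    {S A : Type*} [Fintype S] [Nonempty S] [Fintype A] [Nonempty A]
    (P : A → S → S → ℝ) (r : A → S → ℝ) (γ : ℝ)
    (hP0 : ∀ a s s', 0 ≤ P a s s') (hP1 : ∀ a s, ∑ s', P a s s' = 1)
    (hγ0 : 0 ≤ γ) (hγ1 : γ < 1)
    (B : (S → ℝ) → S → ℝ)
    (hB : ∀ v s, B v s =
      Finset.univ.sup' Finset.univ_nonempty
        (fun a => r a s + γ * ∑ s', P a s s' * v s'))
    (vstar : S → ℝ) (hfix : B vstar = vstar)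
    (ρ ρbar : S → ℝ)
    (hρ0 : ∀ s, ρ s ≥ 0) (hρ1 : ∑ s, ρ s = 1)
    (hρbar0 : ∀ s, ρbar s ≥ 0) (hρbar1 : ∑ s, ρbar s = 1)
    (R : Set (S → ℝ))
    (hR : ∀ u ∈ R, ∀ k : ℝ, (fun s => u s + k) ∈ R)
    (D : Set (S × A)) (Ttilde : Set (S → ℝ))
    (εp εs εc : ℝ) (hεp : 0 ≤ εp) (hεs : 0 ≤ εs) (hεc : 0 ≤ εc)
    -- (i) every D-feasible v ∈ R is εp-transitive-feasible
    (hSampling : ∀ v ∈ R,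
      (∀ p ∈ D, v p.1 ≥ r p.2 p.1 + γ * ∑ s', P p.2 p.1 s' * v s') →
      (∀ s, v s ≥ B v s - εp))
    -- (ii) sandwich condition on the estimated feasible set
    (hSandwich1 : ∀ v ∈ R,
      (∀ p ∈ D, v p.1 ≥ r p.2 p.1 + γ * (∑ s', P p.2 p.1 s' * v s') - (-εs)) →
      v ∈ Ttilde)
    (hSandwich2 : ∀ v ∈ Ttilde ∩ R,
      ∀ p ∈ D, v p.1 ≥ r p.2 p.1 + γ * (∑ s', P p.2 p.1 s' * v s') - εs)
    -- (iii) objective estimation error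
    (hObj : ∀ v ∈ R, |(∑ s, ρ s * v s) - (∑ s, ρbar s * v s)| ≤ εc)
    -- (iv) vhat optimal for the full ALP
    (vhat : S → ℝ) (hvhatR : vhat ∈ R) (hvhatTF : ∀ s, vhat s ≥ B vhat s)
    (hvhatOpt : ∀ u ∈ R, (∀ s, u s ≥ B u s) →
      ∑ s, ρ s * vhat s ≤ ∑ s, ρ s * u s)
    -- (v) vtilde optimal for the estimated ALP
    (vtilde : S → ℝ) (hvtilde : vtilde ∈ Ttilde ∩ R)
    (hvtildeOpt : ∀ u ∈ Ttilde ∩ R,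
      ∑ s, ρbar s * vtilde s ≤ ∑ s, ρbar s * u s) :
    ∀ v ∈ R,
      ∑ s, ρ s * |vtilde s - vstar s| ≤
        (2 / (1 - γ)) *
          Finset.univ.sup' Finset.univ_nonempty (fun s => |v s - vstar s|)
        + 2 * εc + (3 * εs + 2 * εp) / (1 - γ) := by
  intro v hv
  have h1γ : (0:ℝ) < 1 - γ := by linarith
  -- monotonicity of B
  have hMono : ∀ (w u : S → ℝ) (m : ℝ), (∀ s', w s' ≤ u s' + m) →
      ∀ s, B w s ≤ B u s + γ * m := by
    intro w u m hm s
    rw [hB, hB, Finset.sup'_le_iff]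
    intro a _
    have h1 : ∑ s', P a s s' * w s' ≤ ∑ s', P a s s' * (u s' + m) :=
      Finset.sum_le_sum fun i _ => mul_le_mul_of_nonneg_left (hm i) (hP0 a s i)
    have h2 : ∑ s', P a s s' * (u s' + m) = (∑ s', P a s s' * u s') + m := by
      simp only [mul_add, Finset.sum_add_distrib, ← Finset.sum_mul, hP1 a s, one_mul]
    have hsum : ∑ s', P a s s' * w s' ≤ (∑ s', P a s s' * u s') + m := by linarith
    have hγsum := mul_le_mul_of_nonneg_left hsum hγ0
    rw [mul_add] at hγsum
    have hle := Finset.le_sup' (fun a => r a s + γ * ∑ s', P a s s' * u s')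
      (Finset.mem_univ a)
    linarith
  -- lower bound from approximate transitive feasibility
  have hLower : ∀ (u : S → ℝ) (ε : ℝ), 0 ≤ ε → (∀ s, u s ≥ B u s - ε) →
      ∀ s, vstar s - u s ≤ ε / (1 - γ) := by
    intro u ε hε hu
    set m := Finset.univ.sup' Finset.univ_nonempty (fun s => vstar s - u s) with hmdef
    have hub : ∀ s, vstar s ≤ u s + m := by
      intro s
      have := Finset.le_sup' (fun s => vstar s - u s) (Finset.mem_univ s)
      linarith [this]
    have key : m ≤ ε + γ * m := by
      obtain ⟨s0, -, hs0⟩ := Finset.exists_mem_eq_sup' Finset.univ_nonempty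
        (fun s => vstar s - u s)
      have h1 : vstar s0 = B vstar s0 := by rw [hfix]
      have h2 : B vstar s0 ≤ B u s0 + γ * m := hMono vstar u m hub s0
      have h3 : u s0 ≥ B u s0 - ε := hu s0
      have h4 : m = vstar s0 - u s0 := hs0
      linarith
    have hm2 : m ≤ ε / (1 - γ) := by
      rw [le_div_iff₀ h1γ]
      nlinarith
    intro s
    have := Finset.le_sup' (fun s => vstar s - u s) (Finset.mem_univ s)
    exact le_trans this hm2
  -- helper: splitting ρ-weighted sums
  have hsplit : ∀ (f : S → ℝ) (C : ℝ), ∑ s, ρ s * (f s + C) = (∑ s, ρ s * f s) + C := by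
    intro f C
    simp only [mul_add, Finset.sum_add_distrib, ← Finset.sum_mul, hρ1, one_mul]
  have hsmono : ∀ (f g : S → ℝ), (∀ s, f s ≤ g s) →
      ∑ s, ρ s * f s ≤ ∑ s, ρ s * g s := by
    intro f g h
    exact Finset.sum_le_sum fun i _ => mul_le_mul_of_nonneg_left (h i) (hρ0 i)
  set k := Finset.univ.sup' Finset.univ_nonempty (fun s => |v s - vstar s|) with hkdef
  have hk : ∀ s, |v s - vstar s| ≤ k := by
    intro s
    exact Finset.le_sup' (fun s => |v s - vstar s|) (Finset.mem_univ s)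
  have hknn : 0 ≤ k := le_trans (abs_nonneg _) (hk (Classical.arbitrary S))
  set c := εs / (1 - γ) with hcdef
  have hcnn : 0 ≤ c := div_nonneg hεs (le_of_lt h1γ)
  have hc : (1 - γ) * c = εs := by
    rw [hcdef]; field_simp
  have hc' : c - γ * c = εs := by linear_combination hc
  -- Step A/B: shifted vtilde is D-feasible
  have hDt := hSandwich2 vtilde hvtilde
  set u := fun s => vtilde s + c with hudef
  have huR : u ∈ R := hR vtilde hvtilde.2 c
  have hPsum : ∀ (p : S × A) (f : S → ℝ) (C : ℝ),
      ∑ s', P p.2 p.1 s' * (f s' + C) = (∑ s', P p.2 p.1 s' * f s') + C := by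
    intro p f C
    simp only [mul_add, Finset.sum_add_distrib, ← Finset.sum_mul, hP1, one_mul]
  have huD : ∀ p ∈ D, u p.1 ≥ r p.2 p.1 + γ * ∑ s', P p.2 p.1 s' * u s' := by
    intro p hp
    have h1 := hDt p hp
    have h2 : ∑ s', P p.2 p.1 s' * u s' = (∑ s', P p.2 p.1 s' * vtilde s') + c :=
      hPsum p vtilde c
    rw [h2, mul_add]
    simp only [hudef]
    linarith [hc']
  have huTF := hSampling u huR huD
  have huLow := hLower u εp hεp huTF
  -- pointwise lower bound for vtilde
  have htLow : ∀ s, vstar s - vtilde s ≤ εs / (1 - γ) + εp / (1 - γ) := by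
    intro s
    have := huLow s
    simp only [hudef] at this
    linarith
  -- Step D: pointwise abs bound
  have hdiv_nn : 0 ≤ εs / (1 - γ) + εp / (1 - γ) := by
    have := div_nonneg hεp (le_of_lt h1γ)
    linarith
  have habs : ∀ s, |vtilde s - vstar s| ≤
      (vtilde s - vstar s) + 2 * (εs / (1 - γ) + εp / (1 - γ)) := by
    intro s
    rcases abs_cases (vtilde s - vstar s) with ⟨h, _⟩ | ⟨h, _⟩
    · linarith [htLow s]
    · linarith [htLow s]
  have hSum1 : ∑ s, ρ s * |vtilde s - vstar s| ≤
      (∑ s, ρ s * vtilde s) - (∑ s, ρ s * vstar s)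
        + 2 * (εs / (1 - γ) + εp / (1 - γ)) := by
    have h1 := hsmono _ _ habs
    have h2 := hsplit (fun s => vtilde s - vstar s) (2 * (εs / (1 - γ) + εp / (1 - γ)))
    have h3 : ∑ s, ρ s * (vtilde s - vstar s)
        = (∑ s, ρ s * vtilde s) - (∑ s, ρ s * vstar s) := by
      simp only [mul_sub, Finset.sum_sub_distrib]
    linarith
  -- Step E: shifted vhat is in Ttilde ∩ R
  set w := fun s => vhat s + c with hwdef
  have hwR : w ∈ R := hR vhat hvhatR c
  have hvhatD : ∀ p ∈ D, vhat p.1 ≥ r p.2 p.1 + γ * ∑ s', P p.2 p.1 s' * vhat s' := by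
    intro p hp
    have h1 := hvhatTF p.1
    have h2 := Finset.le_sup' (fun a => r a p.1 + γ * ∑ s', P a p.1 s' * vhat s')
      (Finset.mem_univ p.2)
    rw [hB] at h1
    linarith
  have hwT : w ∈ Ttilde := by
    apply hSandwich1 w hwR
    intro p hp
    have h1 := hvhatD p hp
    have h2 : ∑ s', P p.2 p.1 s' * w s' = (∑ s', P p.2 p.1 s' * vhat s') + c :=
      hPsum p vhat c
    rw [h2, mul_add]
    simp only [hwdef]
    linarith [hc']
  -- Step F: objective comparisons
  have hF1 : ∑ s, ρ s * vtilde s ≤ (∑ s, ρbar s * vtilde s) + εc := by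
    have := hObj vtilde hvtilde.2
    have := abs_le.mp this
    linarith [this.2]
  have hF2 : ∑ s, ρbar s * vtilde s ≤ ∑ s, ρbar s * w s :=
    hvtildeOpt w ⟨hwT, hwR⟩
  have hF3 : ∑ s, ρ s * w s ≤ (∑ s, ρbar s * w s) + εc ∧
      ∑ s, ρbar s * w s ≤ (∑ s, ρ s * w s) + εc := by
    have := abs_le.mp (hObj w hwR)
    constructor <;> linarith [this.1, this.2]
  have hFw : ∑ s, ρ s * w s = (∑ s, ρ s * vhat s) + c := hsplit vhat c
  have hF : ∑ s, ρ s * vtilde s ≤ (∑ s, ρ s * vhat s) + c + 2 * εc := by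
    linarith [hF3.2]
  -- Step G: shifted v is transitive feasible
  set c2 := (1 + γ) * k / (1 - γ) with hc2def
  have hc2 : (1 - γ) * c2 = (1 + γ) * k := by
    rw [hc2def]; field_simp
  set v2 := fun s => v s + c2 with hv2def
  have hv2R : v2 ∈ R := hR v hv c2
  have hv2TF : ∀ s, v2 s ≥ B v2 s := by
    intro s
    have hub : ∀ s', v2 s' ≤ vstar s' + (k + c2) := by
      intro s'
      have h2 := abs_le.mp (hk s')
      simp only [hv2def]
      linarith [h2.2]
    have h1 := hMono v2 vstar (k + c2) hub s
    have h2 : B vstar s = vstar s := by rw [hfix]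
    have h3 := abs_le.mp (hk s)
    simp only [hv2def] at h1 ⊢
    nlinarith [h3.1]
  have hG : ∑ s, ρ s * vhat s ≤ (∑ s, ρ s * vstar s) + k + c2 := by
    have h1 := hvhatOpt v2 hv2R hv2TF
    have h2 := hsplit v c2
    have h3 : ∑ s, ρ s * v s ≤ (∑ s, ρ s * vstar s) + k := by
      have h4 := hsplit vstar k
      have h5 : ∑ s, ρ s * v s ≤ ∑ s, ρ s * (vstar s + k) := by
        apply hsmono
        intro s
        have := abs_le.mp (hk s)
        linarith [this.2]
      linarith
    simp only [hv2def] at h1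
    linarith
  -- final arithmetic
  have heq : (∑ s, ρ s * vstar s) + k + c2 + c + 2 * εc - (∑ s, ρ s * vstar s)
      + 2 * (εs / (1 - γ) + εp / (1 - γ))
      = 2 / (1 - γ) * k + 2 * εc + (3 * εs + 2 * εp) / (1 - γ) := by
    rw [hcdef, hc2def]
    field_simp
    ring
  calc ∑ s, ρ s * |vtilde s - vstar s|
      ≤ (∑ s, ρ s * vtilde s) - (∑ s, ρ s * vstar s)
        + 2 * (εs / (1 - γ) + εp / (1 - γ)) := hSum1
    _ ≤ (∑ s, ρ s * vstar s) + k + c2 + c + 2 * εc - (∑ s, ρ s * vstar s)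
        + 2 * (εs / (1 - γ) + εp / (1 - γ)) := by linarith
    _ = 2 / (1 - γ) * k + 2 * εc + (3 * εs + 2 * εp) / (1 - γ) := heq
end

section
/- (Online error bound.) Let v* : S → ℝ be a fixed point of B, let ρ and ρ̄ be distributions on S, and ε_s, ε_p, ε_c ≥ 0. Let v : S → ℝ be (ε_s + ε_p)-transitive-feasible and satisfy |ρᵀv − ρ̄ᵀv| ≤ ε_c. Then ‖v* − v‖_{1,ρ} ≤ ρ̄ᵀv − ρᵀv* + ε_c + 2(ε_s + ε_p)/(1−γ). -/
theorem online_error_bound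
    {S A : Type*} [Fintype S] [Nonempty S] [Fintype A] [Nonempty A]
    (P : A → S → S → ℝ) (r : A → S → ℝ) (γ : ℝ)
    (hP0 : ∀ a s s', 0 ≤ P a s s') (hP1 : ∀ a s, ∑ s', P a s s' = 1)
    (hγ0 : 0 ≤ γ) (hγ1 : γ < 1)
    (B : (S → ℝ) → S → ℝ)
    (hB : ∀ v s, B v s =
      Finset.univ.sup' Finset.univ_nonempty
        (fun a => r a s + γ * ∑ s', P a s s' * v s'))
    (vstar : S → ℝ) (hfix : B vstar = vstar)
    (ρ ρbar : S → ℝ)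
    (hρ0 : ∀ s, ρ s ≥ 0) (hρ1 : ∑ s, ρ s = 1)
    (hρbar0 : ∀ s, ρbar s ≥ 0) (hρbar1 : ∑ s, ρbar s = 1)
    (εs εp εc : ℝ) (hεs : 0 ≤ εs) (hεp : 0 ≤ εp) (hεc : 0 ≤ εc)
    (v : S → ℝ) (hv : ∀ s, v s ≥ B v s - (εs + εp))
    (hvObj : |(∑ s, ρ s * v s) - (∑ s, ρbar s * v s)| ≤ εc) :
    ∑ s, ρ s * |vstar s - v s| ≤
      (∑ s, ρbar s * v s) - (∑ s, ρ s * vstar s)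
        + εc + 2 * (εs + εp) / (1 - γ) := by
  set ε := εs + εp with hεdef
  have hεnn : 0 ≤ ε := by positivity
  have h1γ : 0 < 1 - γ := by linarith
  have hc : 0 ≤ ε / (1 - γ) := div_nonneg hεnn h1γ.le
  have key : ∀ s, vstar s - v s ≤ ε / (1 - γ) := by
    set M := Finset.univ.sup' Finset.univ_nonempty (fun s => vstar s - v s) with hM
    have hle : ∀ s, vstar s - v s ≤ M := fun s =>
      Finset.le_sup' (fun s => vstar s - v s) (Finset.mem_univ s)
    obtain ⟨s₀, -, hs₀⟩ := Finset.exists_mem_eq_sup' (Finset.univ_nonempty (α := S))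
      (fun s => vstar s - v s)
    obtain ⟨a, -, ha⟩ := Finset.exists_mem_eq_sup' (Finset.univ_nonempty (α := A))
      (fun a => r a s₀ + γ * ∑ s', P a s₀ s' * vstar s')
    have hvstar : vstar s₀ = r a s₀ + γ * ∑ s', P a s₀ s' * vstar s' := by
      conv_lhs => rw [← hfix]
      rw [hB]; exact ha
    have hvlow : v s₀ ≥ r a s₀ + γ * ∑ s', P a s₀ s' * v s' - ε := by
      have h1 := hv s₀
      have h2 : r a s₀ + γ * ∑ s', P a s₀ s' * v s' ≤ B v s₀ := by
        rw [hB]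
        exact Finset.le_sup' (fun a => r a s₀ + γ * ∑ s', P a s₀ s' * v s')
          (Finset.mem_univ a)
      linarith
    have hsum : (∑ s', P a s₀ s' * vstar s') - ∑ s', P a s₀ s' * v s' ≤ M := by
      rw [← Finset.sum_sub_distrib]
      calc ∑ s', (P a s₀ s' * vstar s' - P a s₀ s' * v s')
          = ∑ s', P a s₀ s' * (vstar s' - v s') := by
            apply Finset.sum_congr rfl; intros; ring
        _ ≤ ∑ s', P a s₀ s' * M := Finset.sum_le_sum fun s' _ =>
            mul_le_mul_of_nonneg_left (hle s') (hP0 a s₀ s')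
        _ = M := by rw [← Finset.sum_mul, hP1, one_mul]
    have hMeq : M = vstar s₀ - v s₀ := hs₀
    have hMle : M ≤ γ * M + ε := by nlinarith
    have hMfin : M ≤ ε / (1 - γ) := by
      rw [le_div_iff₀ h1γ]; nlinarith
    exact fun s => (hle s).trans hMfin
  have habs : ∀ s, |vstar s - v s| ≤ (v s - vstar s) + 2 * (ε / (1 - γ)) := by
    intro s
    rcases abs_cases (vstar s - v s) with ⟨h, _⟩ | ⟨h, _⟩ <;> nlinarith [key s]
  have hobj : (∑ s, ρ s * v s) ≤ (∑ s, ρbar s * v s) + εc := by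
    have := abs_le.mp hvObj
    linarith [this.2]
  have main : ∑ s, ρ s * |vstar s - v s| ≤
      (∑ s, ρ s * v s) - (∑ s, ρ s * vstar s) + 2 * (ε / (1 - γ)) := by
    calc ∑ s, ρ s * |vstar s - v s|
        ≤ ∑ s, ρ s * ((v s - vstar s) + 2 * (ε / (1 - γ))) :=
          Finset.sum_le_sum fun s _ => mul_le_mul_of_nonneg_left (habs s) (hρ0 s)
      _ = (∑ s, ρ s * v s) - (∑ s, ρ s * vstar s)
          + (∑ s, ρ s) * (2 * (ε / (1 - γ))) := by
          rw [Finset.sum_mul, ← Finset.sum_sub_distrib, ← Finset.sum_add_distrib]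
          apply Finset.sum_congr rfl; intros; ring
      _ = (∑ s, ρ s * v s) - (∑ s, ρ s * vstar s) + 2 * (ε / (1 - γ)) := by
          rw [hρ1, one_mul]
  have : 2 * ε / (1 - γ) = 2 * (ε / (1 - γ)) := by ring
  rw [hεdef] at this
  linarith [main, hobj]
end

section
/- (Sufficient sampling implies bounded constraint violation.) Let Φ : S → Fin n → ℝ be a feature matrix, w : Fin n → ℝ weights with ∑_i |w i| ≤ ψ, and define v s = ∑_i w i * Φ s i. Let S̄ ⊆ S be a set of sampled states and δ_φ, δ_r, δ_p ≥ 0 such that for every s ∈ S there exists s̄ ∈ S̄ with: (a) |Φ s̄ i − Φ s i| ≤ δ_φ for all i; (b) |r a s̄ − r a s| ≤ δ_r for all a ∈ A; (c) |∑_{s'} P a s̄ s' * Φ s' i − ∑_{s'} P a s s' * Φ s' i| ≤ δ_p for all a ∈ A and all i. If v satisfies the sampled Bellman constraints, i.e., v s̄ ≥ r a s̄ + γ * ∑_{s'} P a s̄ s' * v s' for every s̄ ∈ S̄ and every a ∈ A, then v is ε_p-transitive-feasible with ε_p = δ_r + ψ*(δ_φ + γ*δ_p). -/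
lemma weighted_diff_bound {n : ℕ} (w x y : Fin n → ℝ) (ψ δ : ℝ)
    (hw : ∑ i, |w i| ≤ ψ) (hδ : 0 ≤ δ) (h : ∀ i, |x i - y i| ≤ δ) :
    |∑ i, w i * x i - ∑ i, w i * y i| ≤ ψ * δ := by
  rw [← Finset.sum_sub_distrib]
  calc |∑ i, (w i * x i - w i * y i)| ≤ ∑ i, |w i * x i - w i * y i| :=
        Finset.abs_sum_le_sum_abs _ _
    _ ≤ ∑ i, |w i| * δ := by
        apply Finset.sum_le_sum
        intro i _
        rw [← mul_sub, abs_mul]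
        exact mul_le_mul_of_nonneg_left (h i) (abs_nonneg _)
    _ = (∑ i, |w i|) * δ := by rw [Finset.sum_mul]
    _ ≤ ψ * δ := mul_le_mul_of_nonneg_right hw hδ

theorem sufficient_sampling_bounded_violation
    {S A : Type*} [Fintype S] [Nonempty S] [Fintype A] [Nonempty A]
    (P : A → S → S → ℝ) (r : A → S → ℝ) (γ : ℝ)
    (hP0 : ∀ a s s', 0 ≤ P a s s') (hP1 : ∀ a s, ∑ s', P a s s' = 1)
    (hγ0 : 0 ≤ γ) (hγ1 : γ < 1)
    (B : (S → ℝ) → S → ℝ)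
    (hB : ∀ v s, B v s =
      Finset.univ.sup' Finset.univ_nonempty
        (fun a => r a s + γ * ∑ s', P a s s' * v s'))
    {n : ℕ} (Φ : S → Fin n → ℝ) (w : Fin n → ℝ) (ψ : ℝ) (hψ : 0 ≤ ψ)
    (hw : ∑ i, |w i| ≤ ψ)
    (v : S → ℝ) (hv : ∀ s, v s = ∑ i, w i * Φ s i)
    (Sbar : Set S) (δφ δr δp : ℝ)
    (hδφ : 0 ≤ δφ) (hδr : 0 ≤ δr) (hδp : 0 ≤ δp)
    (hCover : ∀ s : S, ∃ sbar ∈ Sbar,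
      (∀ i, |Φ sbar i - Φ s i| ≤ δφ) ∧
      (∀ a : A, |r a sbar - r a s| ≤ δr) ∧
      (∀ a : A, ∀ i, |(∑ s', P a sbar s' * Φ s' i) - (∑ s', P a s s' * Φ s' i)| ≤ δp))
    (hFeas : ∀ sbar ∈ Sbar, ∀ a : A,
      v sbar ≥ r a sbar + γ * ∑ s', P a sbar s' * v s') :
    ∀ s, v s ≥ B v s - (δr + ψ * (δφ + γ * δp)) := by
  intro s
  obtain ⟨sb, hsb, hφ, hr, hp⟩ := hCover s
  rw [hB, ge_iff_le, sub_le_iff_le_add]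
  apply Finset.sup'_le
  intro a _
  -- interchange sums
  have hswap : ∀ t : S, ∑ s', P a t s' * v s' = ∑ i, w i * ∑ s', P a t s' * Φ s' i := by
    intro t
    simp only [hv, Finset.mul_sum]
    rw [Finset.sum_comm]
    congr 1; ext i; congr 1; ext s'; ring
  -- bounds
  have h1 : |v sb - v s| ≤ ψ * δφ := by
    rw [hv, hv]
    exact weighted_diff_bound w (Φ sb) (Φ s) ψ δφ hw hδφ hφ
  have h2 : |(∑ s', P a sb s' * v s') - (∑ s', P a s s' * v s')| ≤ ψ * δp := by
    rw [hswap, hswap]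
    exact weighted_diff_bound w _ _ ψ δp hw hδp (hp a)
  have h3 := hFeas sb hsb a
  have h4 := abs_le.mp (hr a)
  have h5 := abs_le.mp h1
  have h6 := abs_le.mp h2
  nlinarith [h4.1, h4.2, h5.1, h5.2, h6.1, h6.2]
end

section
/- (Lipschitz MDP sampling bound.) Let E be a real normed vector space, k : S → E, and K_r, K_P, K_φ, c, ψ ≥ 0. Let Φ : S → Fin n → ℝ be a feature matrix with ∑_{z∈S} |Φ z i| = 1 for each i, and assume: |r a x − r a y| ≤ K_r * ‖k x − k y‖ for all a, x, y; |P a x z − P a y z| ≤ K_P * ‖k x − k y‖ for all a, x, y, z; |Φ x i − Φ y i| ≤ K_φ * ‖k x − k y‖ for all i, x, y. Let S̄ ⊆ S satisfy the covering condition: for every s ∈ S there exists s̄ ∈ S̄ with ‖k s − k s̄‖ ≤ c. Let w : Fin n → ℝ with ∑_i |w i| ≤ ψ and define v s = ∑_i w i * Φ s i. If v s̄ ≥ r a s̄ + γ * ∑_{s'} P a s̄ s' * v s' for every s̄ ∈ S̄ and every a ∈ A, then v is ε_p-transitive-feasible with ε_p = c*K_r + c*ψ*(K_φ + γ*K_P).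 -/
theorem lipschitz_mdp_sampling_bound
    {S A : Type*} [Fintype S] [Nonempty S] [Fintype A] [Nonempty A]
    {E : Type*} [NormedAddCommGroup E] [NormedSpace ℝ E]
    (P : A → S → S → ℝ) (r : A → S → ℝ) (γ : ℝ)
    (hP0 : ∀ a s s', 0 ≤ P a s s') (hP1 : ∀ a s, ∑ s', P a s s' = 1)
    (hγ0 : 0 ≤ γ) (hγ1 : γ < 1)
    (B : (S → ℝ) → S → ℝ)
    (hB : ∀ v s, B v s =
      Finset.univ.sup' Finset.univ_nonempty
        (fun a => r a s + γ * ∑ s', P a s s' * v s'))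
    (k : S → E) (Kr KP Kφ c ψ : ℝ)
    (hKr : 0 ≤ Kr) (hKP : 0 ≤ KP) (hKφ : 0 ≤ Kφ) (hc : 0 ≤ c) (hψ : 0 ≤ ψ)
    {n : ℕ} (Φ : S → Fin n → ℝ)
    (hΦnorm : ∀ i, ∑ z, |Φ z i| = 1)
    (hrLip : ∀ a : A, ∀ x y : S, |r a x - r a y| ≤ Kr * ‖k x - k y‖)
    (hPLip : ∀ a : A, ∀ x y z : S, |P a x z - P a y z| ≤ KP * ‖k x - k y‖)
    (hΦLip : ∀ i, ∀ x y : S, |Φ x i - Φ y i| ≤ Kφ * ‖k x - k y‖)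
    (Sbar : Set S)
    (hCover : ∀ s : S, ∃ sbar ∈ Sbar, ‖k s - k sbar‖ ≤ c)
    (w : Fin n → ℝ) (hw : ∑ i, |w i| ≤ ψ)
    (v : S → ℝ) (hv : ∀ s, v s = ∑ i, w i * Φ s i)
    (hFeas : ∀ sbar ∈ Sbar, ∀ a : A,
      v sbar ≥ r a sbar + γ * ∑ s', P a sbar s' * v s') :
    ∀ s, v s ≥ B v s - (c * Kr + c * ψ * (Kφ + γ * KP)) := by
  intro s
  obtain ⟨sb, hsbm, hd⟩ := hCover s
  -- bound on |v s - v sb|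
  have hvd : |v s - v sb| ≤ c * ψ * Kφ := by
    rw [hv, hv, ← Finset.sum_sub_distrib]
    calc |∑ i, (w i * Φ s i - w i * Φ sb i)|
        ≤ ∑ i, |w i * Φ s i - w i * Φ sb i| := Finset.abs_sum_le_sum_abs _ _
      _ ≤ ∑ i, |w i| * (Kφ * c) := by
          apply Finset.sum_le_sum
          intro i _
          rw [← mul_sub, abs_mul]
          refine mul_le_mul_of_nonneg_left ?_ (abs_nonneg _)
          exact le_trans (hΦLip i s sb) (mul_le_mul_of_nonneg_left hd hKφ)
      _ = (∑ i, |w i|) * (Kφ * c) := by rw [Finset.sum_mul]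
      _ ≤ ψ * (Kφ * c) := by
          exact mul_le_mul_of_nonneg_right hw (mul_nonneg hKφ hc)
      _ = c * ψ * Kφ := by ring
  -- bound on the P term
  have hPd : ∀ a : A, |(∑ s', P a s s' * v s') - ∑ s', P a sb s' * v s'| ≤ c * ψ * KP := by
    intro a
    rw [← Finset.sum_sub_distrib]
    calc |∑ s', (P a s s' * v s' - P a sb s' * v s')|
        ≤ ∑ s', |P a s s' * v s' - P a sb s' * v s'| := Finset.abs_sum_le_sum_abs _ _
      _ = ∑ s', |P a s s' - P a sb s'| * |v s'| := by
          refine Finset.sum_congr rfl fun s' _ => ?_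
          rw [← sub_mul, abs_mul]
      _ ≤ ∑ s', (KP * c) * (∑ i, |w i| * |Φ s' i|) := by
          apply Finset.sum_le_sum
          intro s' _
          have h1 : |P a s s' - P a sb s'| ≤ KP * c :=
            le_trans (hPLip a s sb s') (mul_le_mul_of_nonneg_left hd hKP)
          have h2 : |v s'| ≤ ∑ i, |w i| * |Φ s' i| := by
            rw [hv]
            refine le_trans (Finset.abs_sum_le_sum_abs _ _) ?_
            exact Finset.sum_le_sum fun i _ => le_of_eq (abs_mul _ _)
          exact mul_le_mul h1 h2 (abs_nonneg _)
            (mul_nonneg hKP hc)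
      _ = (KP * c) * ∑ i, |w i| * (∑ s', |Φ s' i|) := by
          rw [← Finset.mul_sum, Finset.sum_comm]
          congr 1
          exact Finset.sum_congr rfl fun i _ => (Finset.mul_sum _ _ _).symm
      _ = (KP * c) * ∑ i, |w i| := by
          congr 1
          exact Finset.sum_congr rfl fun i _ => by rw [hΦnorm i, mul_one]
      _ ≤ (KP * c) * ψ := by
          exact mul_le_mul_of_nonneg_left hw (mul_nonneg hKP hc)
      _ = c * ψ * KP := by ring
  rw [hB]
  rw [ge_iff_le, sub_le_iff_le_add]
  apply Finset.sup'_le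
  intro a _
  have hr : r a s ≤ r a sb + Kr * c := by
    have := abs_sub_le_iff.mp (le_trans (hrLip a s sb) (mul_le_mul_of_nonneg_left hd hKr))
    linarith [this.1]
  have hp : (∑ s', P a s s' * v s') ≤ (∑ s', P a sb s' * v s') + c * ψ * KP := by
    have := abs_sub_le_iff.mp (hPd a)
    linarith [this.1]
  have hvs : v sb ≤ v s + c * ψ * Kφ := by
    have := abs_sub_le_iff.mp hvd
    linarith [this.2]
  have hfeas := hFeas sb hsbm a
  calc r a s + γ * ∑ s', P a s s' * v s'
      ≤ (r a sb + Kr * c) + γ * ((∑ s', P a sb s' * v s') + c * ψ * KP) := by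
        have := mul_le_mul_of_nonneg_left hp hγ0
        linarith
    _ = (r a sb + γ * ∑ s', P a sb s' * v s') + Kr * c + γ * (c * ψ * KP) := by ring
    _ ≤ v sb + Kr * c + γ * (c * ψ * KP) := by linarith
    _ ≤ v s + (c * Kr + c * ψ * (Kφ + γ * KP)) := by linarith
end
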